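/- (Sign change lemma) If p(z) = Σ_{j=0}^n a_j z^j is a real polynomial and (z+1)p(z) = Σ_{j=0}^{n+1} b_j z^j, then the number of sign changes in the coefficient sequence (b_0, …, b_{n+1}) is at most the number of sign changes in (a_0, …, a_n). -/
import Mathlib


open Polynomial

/-- The number of sign changes of a finite sequence of reals: zeros are discarded,
and we count adjacent pairs of opposite sign in the remaining sequence. -/
noncomputable def signChanges (l : List ℝ) : ℕ :=
  let l' := l.filter (fun x => decide (x ≠ 0))
  (l'.zip l'.tail).countP (fun p => decide (p.1 * p.2 < 0))

/-- The number of sign changes of the coefficient sequence of a real polynomial. -/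
noncomputable def coeffSignChanges (p : Polynomial ℝ) : ℕ :=
  signChanges ((List.range (p.natDegree + 1)).map p.coeff)

namespace SignAux

/-- sign transitivity helpers -/
lemma pp {a b c : ℝ} (h1 : 0 < a * b) (h2 : 0 < c * b) : 0 < a * c := by
  rcases mul_pos_iff.mp h1 with ⟨ha, hb⟩ | ⟨ha, hb⟩ <;>
    rcases mul_pos_iff.mp h2 with ⟨hc, hb'⟩ | ⟨hc, hb'⟩ <;>
      first
        | exact mul_pos ha hc
        | exact mul_pos_of_neg_of_neg ha hc
        | linarith

lemma pn {a b c : ℝ} (h1 : 0 < a * b) (h2 : c * b < 0) : a * c < 0 := by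
  rcases mul_pos_iff.mp h1 with ⟨ha, hb⟩ | ⟨ha, hb⟩ <;>
    rcases mul_neg_iff.mp h2 with ⟨hc, hb'⟩ | ⟨hc, hb'⟩ <;>
      first
        | exact mul_neg_of_pos_of_neg ha hc
        | exact mul_neg_of_neg_of_pos ha hc
        | linarith

lemma nn {a b c : ℝ} (h1 : a * b < 0) (h2 : c * b < 0) : 0 < a * c := by
  rcases mul_neg_iff.mp h1 with ⟨ha, hb⟩ | ⟨ha, hb⟩ <;>
    rcases mul_neg_iff.mp h2 with ⟨hc, hb'⟩ | ⟨hc, hb'⟩ <;>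
      first
        | exact mul_pos ha hc
        | exact mul_pos_of_neg_of_neg ha hc
        | linarith

lemma comm_pos {a b : ℝ} (h : 0 < a * b) : 0 < b * a := by rwa [mul_comm] at h
lemma comm_neg {a b : ℝ} (h : a * b < 0) : b * a < 0 := by rwa [mul_comm] at h

/-- Recursive sign-change count with a "previous value" state `c`. -/
noncomputable def Vc : ℝ → List ℝ → ℕ
  | _, [] => 0
  | c, x :: l => if x = 0 then Vc c l else (if c * x < 0 then 1 else 0) + Vc x l

/-- Running pairwise sums with carry `c`: `auxL c [y₁,…,yₖ] = [c+y₁, y₁+y₂, …, yₖ]`. -/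
noncomputable def auxL : ℝ → List ℝ → List ℝ
  | c, [] => [c]
  | c, y :: l => (c + y) :: auxL y l

lemma vc_cons_eq (c : ℝ) (hc : c ≠ 0) (l : List ℝ) :
    Vc c l = signChanges (c :: l) := by
  induction l generalizing c with
  | nil => simp [Vc, signChanges, hc]
  | cons x l ih =>
    by_cases hx : x = 0
    · subst hx
      simp only [Vc, if_pos rfl]
      rw [ih c hc]
      simp [signChanges, hc]
    · simp only [Vc, if_neg hx]
      rw [ih x hx]
      simp only [signChanges, List.filter_cons, hc, hx, decide_not, decide_eq_true_eq,
        ite_not]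
      simp [hc, hx, List.zip_cons_cons, List.countP_cons]
      by_cases h : c * x < 0 <;> simp [h] <;> omega

lemma vc_zero_eq (l : List ℝ) : Vc 0 l = signChanges l := by
  induction l with
  | nil => simp [Vc, signChanges]
  | cons x l ih =>
    by_cases hx : x = 0
    · subst hx
      simp only [Vc, if_pos rfl]
      rw [ih]
      simp [signChanges]
    · simp only [Vc, if_neg hx]
      rw [vc_cons_eq x hx l]
      simp

/-- The key combinatorial lemma with state `s` = last nonzero emitted value of the
sum-sequence, `t` = last nonzero value of the original sequence, `c` = carry. -/
lemma keyAB (l : List ℝ) :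
    (∀ s t c : ℝ, 0 < s * t → 0 ≤ c * t → Vc s (auxL c l) ≤ Vc t l) ∧
    (∀ s t c : ℝ, s * t < 0 → 0 ≤ c * t → Vc s (auxL c l) ≤ Vc t l + 1) := by
  induction l with
  | nil =>
    constructor
    · intro s t c hst hct
      by_cases hc : c = 0
      · simp [auxL, Vc, hc]
      · have ht : t ≠ 0 := fun h => by simp [h] at hst
        have hct' : 0 < c * t := lt_of_le_of_ne hct (Ne.symm (mul_ne_zero hc ht))
        have hsc : ¬ s * c < 0 := (pp hst hct').asymm
        simp [auxL, Vc, hc, hsc]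
    · intro s t c hst hct
      by_cases hc : c = 0
      · simp [auxL, Vc, hc]
      · simp only [auxL, Vc, if_neg hc]
        split <;> simp [Vc]
  | cons y l ih =>
    obtain ⟨ihA, ihB⟩ := ih
    constructor
    · -- case A : same signs, slack 0
      intro s t c hst hct
      have ht : t ≠ 0 := fun h => by simp [h] at hst
      have hs : s ≠ 0 := fun h => by simp [h] at hst
      simp only [auxL]
      by_cases hy : y = 0
      · subst hy
        rw [add_zero]
        simp only [Vc, if_pos rfl]
        by_cases hc : c = 0
        · subst hc
          simp only [if_pos rfl]
          exact ihA s t 0 hst (by simp)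
        · have hct' : 0 < c * t := lt_of_le_of_ne hct (Ne.symm (mul_ne_zero hc ht))
          have hsc : ¬ s * c < 0 := (pp hst hct').asymm
          simp only [if_neg hc, hsc, if_false, zero_add]
          exact ihA c t 0 hct' (by simp)
      · have hyt : y * t ≠ 0 := mul_ne_zero hy ht
        rcases hyt.lt_or_gt with hyt | hyt
        · -- y has sign opposite to t
          have hty : t * y < 0 := comm_neg hyt
          have hsy : s * y < 0 := pn hst hyt
          simp only [Vc, if_neg hy, hty, if_pos]
          by_cases hz : c + y = 0
          · rw [if_pos hz]
            have := ihB s y y hsy (mul_self_nonneg y)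
            omega
          · rw [if_neg hz]
            by_cases hsz : s * (c + y) < 0
            · rw [if_pos hsz]
              have hzy : 0 < (c + y) * y := nn (comm_neg hsz) (comm_neg hsy)
              have := ihA (c + y) y y hzy (mul_self_nonneg y)
              omega
            · rw [if_neg hsz]
              have hsz' : 0 < s * (c + y) :=
                lt_of_le_of_ne (not_lt.mp hsz) (Ne.symm (mul_ne_zero hs hz))
              have hzy : (c + y) * y < 0 := pn (comm_pos hsz') (comm_neg hsy)
              have := ihB (c + y) y y hzy (mul_self_nonneg y)
              omega
        · -- y has the same sign as t
          have hty : ¬ t * y < 0 := (comm_pos hyt).asymm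
          have hzt : 0 < (c + y) * t := by
            have h1 : (c + y) * t = c * t + y * t := by ring
            linarith
          have hz : c + y ≠ 0 := fun h => by rw [h] at hzt; simp at hzt
          have hsz : ¬ s * (c + y) < 0 := (pp hst hzt).asymm
          simp only [Vc, if_neg hy, hty, if_false, if_neg hz, hsz, zero_add]
          exact ihA (c + y) y y (pp hzt hyt) (mul_self_nonneg y)
    · -- case B : opposite signs, slack 1
      intro s t c hst hct
      have ht : t ≠ 0 := fun h => by simp [h] at hst
      have hs : s ≠ 0 := fun h => by simp [h] at hst
      simp only [auxL]
      by_cases hy : y = 0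
      · subst hy
        rw [add_zero]
        simp only [Vc, if_pos rfl]
        by_cases hc : c = 0
        · subst hc
          simp only [if_pos rfl]
          exact ihB s t 0 hst (by simp)
        · have hct' : 0 < c * t := lt_of_le_of_ne hct (Ne.symm (mul_ne_zero hc ht))
          have hsc : s * c < 0 := comm_neg (pn hct' hst)
          simp only [if_neg hc, hsc, if_pos]
          have := ihA c t 0 hct' (by simp)
          omega
      · have hyt : y * t ≠ 0 := mul_ne_zero hy ht
        rcases hyt.lt_or_gt with hyt | hyt
        · -- y has sign opposite to t, i.e. same sign as s
          have hty : t * y < 0 := comm_neg hyt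
          have hsy : 0 < s * y := nn hst hyt
          simp only [Vc, if_neg hy, hty, if_pos]
          by_cases hz : c + y = 0
          · rw [if_pos hz]
            have := ihA s y y hsy (mul_self_nonneg y)
            omega
          · rw [if_neg hz]
            by_cases hsz : s * (c + y) < 0
            · rw [if_pos hsz]
              have hzy : (c + y) * y < 0 := comm_neg (pn (comm_pos hsy) (comm_neg hsz))
              have := ihB (c + y) y y hzy (mul_self_nonneg y)
              omega
            · rw [if_neg hsz]
              have hsz' : 0 < s * (c + y) :=
                lt_of_le_of_ne (not_lt.mp hsz) (Ne.symm (mul_ne_zero hs hz))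
              have hzy : 0 < (c + y) * y := pp (comm_pos hsz') (comm_pos hsy)
              have := ihA (c + y) y y hzy (mul_self_nonneg y)
              omega
        · -- y has the same sign as t, opposite of s
          have hty : ¬ t * y < 0 := (comm_pos hyt).asymm
          have hzt : 0 < (c + y) * t := by
            have h1 : (c + y) * t = c * t + y * t := by ring
            linarith
          have hz : c + y ≠ 0 := fun h => by rw [h] at hzt; simp at hzt
          have hsz : s * (c + y) < 0 := comm_neg (pn hzt hst)
          simp only [Vc, if_neg hy, hty, if_false, if_neg hz, hsz, if_pos]
          have := ihA (c + y) y y (pp hzt hyt) (mul_self_nonneg y)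
          omega

lemma keyC : ∀ l : List ℝ, Vc 0 (auxL 0 l) ≤ Vc 0 l := by
  intro l
  induction l with
  | nil => simp [auxL, Vc]
  | cons y l ih =>
    simp only [auxL, zero_add]
    by_cases hy : y = 0
    · subst hy
      simp only [Vc, if_pos rfl]
      exact ih
    · simp only [Vc, if_neg hy, zero_mul, lt_irrefl, if_neg (lt_irrefl 0), zero_add]
      simpa using (keyAB l).1 y y y (mul_self_pos.mpr hy) (mul_self_nonneg y)

lemma main_list (c : ℝ) (l : List ℝ) :
    Vc 0 (c :: auxL c l) ≤ Vc 0 (c :: l) := by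
  by_cases hc : c = 0
  · subst hc
    simp only [Vc, if_pos rfl]
    exact keyC l
  · simp only [Vc, if_neg hc, zero_mul, lt_irrefl, if_neg (lt_irrefl 0), zero_add]
    simpa using (keyAB l).1 c c c (mul_self_pos.mpr hc) (mul_self_nonneg c)

lemma auxL_map_range' (f : ℕ → ℝ) : ∀ (n s : ℕ),
    auxL (f s) ((List.range' (s + 1) n).map f) =
      ((List.range' (s + 1) n).map fun j => f (j - 1) + f j) ++ [f (s + n)] := by
  intro n
  induction n with
  | zero => intro s; simp [auxL]
  | succ n ih =>
    intro s
    rw [List.range'_succ]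
    simp only [List.map_cons, auxL]
    rw [ih (s + 1)]
    simp only [List.cons_append]
    rw [show s + 1 - 1 = s from rfl, show s + 1 + n = s + (n + 1) from by omega]

end SignAux

open SignAux in
/-- Multiplying a real polynomial by `z + 1` does not increase the number of sign
changes of the coefficient sequence. -/
theorem signChanges_mul_X_add_one (p : Polynomial ℝ) :
    coeffSignChanges ((Polynomial.X + 1) * p) ≤ coeffSignChanges p := by
  by_cases hp : p = 0
  · subst hp
    simp [coeffSignChanges, signChanges]
  · set n := p.natDegree with hn
    have hX1 : (X + 1 : ℝ[X]) = X + C 1 := by rw [map_one]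
    have hq : ((X + 1 : ℝ[X]) * p).natDegree = n + 1 := by
      rw [hX1, natDegree_mul (X_add_C_ne_zero 1) hp, natDegree_X_add_C]
      omega
    have hcoeff : ∀ j : ℕ, 1 ≤ j →
        ((X + 1 : ℝ[X]) * p).coeff j = p.coeff (j - 1) + p.coeff j := by
      intro j hj
      obtain ⟨k, rfl⟩ : ∃ k, j = k + 1 := ⟨j - 1, by omega⟩
      rw [add_mul, one_mul, coeff_add, coeff_X_mul]
      simp
    have hcoeff0 : ((X + 1 : ℝ[X]) * p).coeff 0 = p.coeff 0 := by
      rw [add_mul, one_mul, coeff_add]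
      simp
    -- identify the coefficient list of (X+1)*p
    have hlist : (List.range (((X + 1 : ℝ[X]) * p).natDegree + 1)).map ((X + 1 : ℝ[X]) * p).coeff
        = p.coeff 0 :: auxL (p.coeff 0) ((List.range' 1 n).map p.coeff) := by
      rw [hq]
      rw [List.range_eq_range']
      rw [show (n + 1 + 1) = (n + 1) + 1 from rfl, List.range'_succ]
      simp only [List.map_cons, zero_add, hcoeff0]
      congr 1
      rw [List.map_congr_left (g := fun j => p.coeff (j - 1) + p.coeff j)
        (fun a ha => hcoeff a (by
          rw [List.mem_range'] at ha; omega))]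
      rw [show auxL (p.coeff 0) ((List.range' 1 n).map p.coeff)
            = auxL (p.coeff 0) ((List.range' (0 + 1) n).map p.coeff) by norm_num]
      rw [auxL_map_range' p.coeff n 0]
      rw [List.range'_concat]
      rw [List.map_append]
      congr 1
      simp only [List.map_cons, List.map_nil]
      have h0 : p.coeff (1 + 1 * n) = 0 := by
        apply coeff_eq_zero_of_natDegree_lt
        omega
      have h1 : (1 : ℕ) + 1 * n - 1 = n := by omega
      rw [h0, h1, add_zero, zero_add]
    have hplist : (List.range (p.natDegree + 1)).map p.coeff
        = p.coeff 0 :: (List.range' 1 n).map p.coeff := by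
      rw [← hn, List.range_eq_range', List.range'_succ]
      simp
    calc coeffSignChanges ((X + 1 : ℝ[X]) * p)
        = Vc 0 (p.coeff 0 :: auxL (p.coeff 0) ((List.range' 1 n).map p.coeff)) := by
          rw [coeffSignChanges, hlist, vc_zero_eq]
      _ ≤ Vc 0 (p.coeff 0 :: (List.range' 1 n).map p.coeff) := main_list _ _
      _ = coeffSignChanges p := by rw [coeffSignChanges, hplist, vc_zero_eq]
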